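/- Rearrangement-type inequality: Let k, t ∈ ℕ. For each (i, j) ∈ [k] × [t] let y_{ij} ≥ 0 with y_{i1} ≤ y_{i2} ≤ … ≤ y_{it} for each i. For each i ∈ [k] let σ_i be a permutation of [t]. Then Σ_{j=1}^{t} Π_{i=1}^{k} y_{i σ_i(j)} ≤ Σ_{j=1}^{t} Π_{i=1}^{k} y_{ij}. -/

import Mathlib

open scoped Classical

/-- Number of proper `k`-colorings of `G` (the chromatic polynomial evaluated at `k`). -/
noncomputable def properCount {V : Type*} (G : SimpleGraph V) (k : ℕ) : ℕ :=
  Nat.card {f : V → Fin k // ∀ u v, G.Adj u v → f u ≠ f v}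

/-- Number of proper `L`-colorings of `G` for a list assignment `L`. -/
noncomputable def listCount {V : Type*} (G : SimpleGraph V) (L : V → Finset ℕ) : ℕ :=
  Nat.card {f : V → ℕ // (∀ v, f v ∈ L v) ∧ ∀ u v, G.Adj u v → f u ≠ f v}

/-- The list color function `P_ℓ(G, k)`. -/
noncomputable def listColorFn {V : Type*} (G : SimpleGraph V) (k : ℕ) : ℕ :=
  sInf {m | ∃ L : V → Finset ℕ, (∀ v, (L v).card = k) ∧ m = listCount G L}

/-- `H` (on vertex set `V × Fin k`, with `L v = {v} × Fin k`) is a `k`-fold DP-cover of `G`: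
each part is a clique, cross-edges only between parts of adjacent vertices, and the
cross-edges between parts of adjacent vertices form a matching. -/
def IsDPCover {V : Type*} (G : SimpleGraph V) (k : ℕ) (H : SimpleGraph (V × Fin k)) : Prop :=
  (∀ v : V, ∀ i j : Fin k, i ≠ j → H.Adj (v, i) (v, j)) ∧
  (∀ u v : V, ∀ i j : Fin k, H.Adj (u, i) (v, j) → u = v ∨ G.Adj u v) ∧
  (∀ u v : V, G.Adj u v →
    (∀ i j j' : Fin k, H.Adj (u, i) (v, j) → H.Adj (u, i) (v, j') → j = j') ∧
    (∀ i i' j : Fin k, H.Adj (u, i) (v, j) → H.Adj (u, i') (v, j) → i = i'))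

/-- A full `k`-fold DP-cover: the matching between the parts of adjacent vertices is perfect. -/
def IsFullDPCover {V : Type*} (G : SimpleGraph V) (k : ℕ) (H : SimpleGraph (V × Fin k)) : Prop :=
  IsDPCover G k H ∧ ∀ u v : V, G.Adj u v → ∀ i : Fin k, ∃! j : Fin k, H.Adj (u, i) (v, j)

/-- The number of `H`-colorings of `G` (independent sets of `H` with one vertex in each part,
encoded as functions `V → Fin k`). -/
noncomputable def dpCount {V : Type*} (k : ℕ) (H : SimpleGraph (V × Fin k)) : ℕ :=
  Nat.card {f : V → Fin k // ∀ u v : V, u ≠ v → ¬ H.Adj (u, f u) (v, f v)}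

/-- The DP color function `P_DP(G, k)`. -/
noncomputable def dpColorFn {V : Type*} (G : SimpleGraph V) (k : ℕ) : ℕ :=
  sInf {m | ∃ H : SimpleGraph (V × Fin k), IsDPCover G k H ∧ m = dpCount k H}

/-- The dual DP color function `P*_DP(G, k)`. -/
noncomputable def dualDPColorFn {V : Type*} (G : SimpleGraph V) (k : ℕ) : ℕ :=
  sSup {m | ∃ H : SimpleGraph (V × Fin k), IsFullDPCover G k H ∧ m = dpCount k H}

open Finset in
private lemma stmt10_tele (T : ℕ) (g : Fin (T+1) → ℝ) (j : Fin (T+1)) :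
    ∑ s ∈ Finset.Iic j, (Fin.cases (g 0) (fun s' => g s'.succ - g s'.castSucc) s : ℝ) = g j := by
  induction j using Fin.induction with
  | zero =>
    have h0 : Finset.Iic (0 : Fin (T+1)) = {0} := by
      ext x; simp
    simp [h0]
  | succ j ih =>
    have hins : Finset.Iic j.succ = insert j.succ (Finset.Iic j.castSucc) := by
      ext x; simp [Fin.le_def, Fin.ext_iff]; omega
    rw [hins, Finset.sum_insert (by simp [Fin.lt_def]), ih]
    simp

open Finset in
private lemma stmt10_decomp (T : ℕ) (g : Fin (T+1) → ℝ) (j : Fin (T+1)) :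
    g j = ∑ s : Fin (T+1),
      (Fin.cases (g 0) (fun s' => g s'.succ - g s'.castSucc) s : ℝ) * (if s ≤ j then 1 else 0) := by
  rw [← stmt10_tele T g j]
  have h : Finset.Iic j = univ.filter (fun s : Fin (T+1) => s ≤ j) := by
    ext x; simp
  rw [h, Finset.sum_filter]
  simp [mul_ite]

open Finset in
private lemma stmt10_key (k t : ℕ) (σ : Fin k → Equiv.Perm (Fin t)) (s : Fin k → Fin t) :
    (univ.filter (fun j : Fin t => ∀ i, s i ≤ σ i j)).card ≤
      (univ.filter (fun j : Fin t => ∀ i, s i ≤ j)).card := by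
  cases isEmpty_or_nonempty (Fin k) with
  | inl h => simp
  | inr h =>
    obtain ⟨i0, -, hi0⟩ := Finset.exists_max_image univ s univ_nonempty
    have h1 : (univ.filter (fun j : Fin t => ∀ i, s i ≤ σ i j)).card ≤
        (univ.filter (fun j : Fin t => s i0 ≤ σ i0 j)).card := by
      apply card_le_card
      intro j hj
      simp only [mem_filter, mem_univ, true_and] at *
      exact hj i0
    have h2 : (univ.filter (fun j : Fin t => s i0 ≤ σ i0 j)).card =
        (univ.filter (fun j : Fin t => s i0 ≤ j)).card := by
      apply Finset.card_bij (fun j _ => σ i0 j)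
      · intro a ha; simp_all
      · intro a ha b hb hab; exact (σ i0).injective hab
      · intro b hb; exact ⟨(σ i0).symm b, by simp_all, by simp⟩
    have h3 : (univ.filter (fun j : Fin t => s i0 ≤ j)) =
        (univ.filter (fun j : Fin t => ∀ i, s i ≤ j)) := by
      apply filter_congr
      intro j _
      constructor
      · intro hj i; exact le_trans (hi0 i (mem_univ i)) hj
      · intro hj; exact hj i0
    calc _ ≤ _ := h1
    _ = _ := h2
    _ = _ := by rw [h3]

theorem stmt10 (k t : ℕ) (y : Fin k → Fin t → ℝ) (hy : ∀ i j, 0 ≤ y i j)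
    (hmono : ∀ i : Fin k, Monotone (y i)) (σ : Fin k → Equiv.Perm (Fin t)) :
    ∑ j : Fin t, ∏ i : Fin k, y i (σ i j) ≤ ∑ j : Fin t, ∏ i : Fin k, y i j := by
  open Finset in
  cases t with
  | zero => simp
  | succ T =>
    set d : Fin k → Fin (T+1) → ℝ :=
      fun i => Fin.cases (y i 0) (fun s' => y i s'.succ - y i s'.castSucc) with hd
    have hd0 : ∀ i s, 0 ≤ d i s := by
      intro i s
      induction s using Fin.cases with
      | zero => simpa [hd] using hy i 0
      | succ s' =>
        simp only [hd, Fin.cases_succ]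
        exact sub_nonneg.2 (hmono i (Fin.castSucc_le_succ s'))
    have expand : ∀ τ : Fin k → Equiv.Perm (Fin (T+1)),
        ∑ j : Fin (T+1), ∏ i : Fin k, y i (τ i j) =
          ∑ f ∈ Fintype.piFinset (fun _ : Fin k => (univ : Finset (Fin (T+1)))),
            (∏ i, d i (f i)) *
              ((univ.filter (fun j : Fin (T+1) => ∀ i, f i ≤ τ i j)).card : ℝ) := by
      intro τ
      calc ∑ j : Fin (T+1), ∏ i : Fin k, y i (τ i j)
          = ∑ j : Fin (T+1), ∏ i : Fin k,
              ∑ s : Fin (T+1), d i s * (if s ≤ τ i j then 1 else 0) := by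
            refine Finset.sum_congr rfl fun j _ => Finset.prod_congr rfl fun i _ => ?_
            exact stmt10_decomp T (y i) (τ i j)
        _ = ∑ j : Fin (T+1), ∑ f ∈ Fintype.piFinset (fun _ : Fin k => (univ : Finset (Fin (T+1)))),
              ∏ i, (d i (f i) * if f i ≤ τ i j then 1 else 0) := by
            refine Finset.sum_congr rfl fun j _ => ?_
            rw [Finset.prod_univ_sum]
        _ = ∑ f ∈ Fintype.piFinset (fun _ : Fin k => (univ : Finset (Fin (T+1)))),
              ∑ j : Fin (T+1), ∏ i, (d i (f i) * if f i ≤ τ i j then 1 else 0) :=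
            Finset.sum_comm
        _ = _ := by
            refine Finset.sum_congr rfl fun f _ => ?_
            have : ∀ j : Fin (T+1), ∏ i, (d i (f i) * if f i ≤ τ i j then 1 else 0) =
                (∏ i, d i (f i)) * if (∀ i, f i ≤ τ i j) then 1 else 0 := by
              intro j
              rw [Finset.prod_mul_distrib, Fintype.prod_boole]
              congr 1; congr 1
            simp only [this, ← Finset.mul_sum, Finset.sum_boole]
    have e2 : ∑ j : Fin (T+1), ∏ i : Fin k, y i j =
        ∑ f ∈ Fintype.piFinset (fun _ : Fin k => (univ : Finset (Fin (T+1)))),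
          (∏ i, d i (f i)) * ((univ.filter (fun j : Fin (T+1) => ∀ i, f i ≤ j)).card : ℝ) := by
      have := expand (fun _ => 1); simp at this; rw [this, Fintype.piFinset_univ]
      refine Finset.sum_congr rfl fun f _ => ?_
      congr 3
    rw [expand σ, e2]
    refine Finset.sum_le_sum fun f _ => ?_
    refine mul_le_mul_of_nonneg_left ?_ (Finset.prod_nonneg fun i _ => hd0 i (f i))
    exact_mod_cast (by simpa using stmt10_key k (T+1) σ f)
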